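/- Let (n_k) be a strictly increasing sequence of positive integers. Then for Lebesgue-almost every s > 0, the set of fractional parts {n_k/s : k ∈ ℕ} is dense in [0,1]. -/

import Mathlib

open MeasureTheory

open Set Filter Metric

lemma key_null (n : ℕ → ℕ) (hpos : ∀ k, 0 < n k) (hmono : StrictMono n)
    (a b : ℝ) (ha : 0 ≤ a) (hab : a < b) (hb : b ≤ 1) :
    volume {t : ℝ | ∀ k, Int.fract ((n k : ℝ) * t) ∉ Set.Ioo a b} = 0 := by
  set B := {t : ℝ | ∀ k, Int.fract ((n k : ℝ) * t) ∉ Set.Ioo a b} with hBdef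
  by_contra hB
  have hden := Besicovitch.ae_tendsto_measure_inter_div volume B
  have hres : volume.restrict B ≠ 0 := by
    exact fun h => hB (Measure.restrict_eq_zero.mp h)
  haveI : (ae (volume.restrict B)).NeBot := ae_neBot.mpr hres
  obtain ⟨t₀, ht₀⟩ := hden.exists
  set c := ENNReal.ofReal (1 - (b - a) / 2) with hc
  have hc1 : c < 1 := by
    rw [hc, ← ENNReal.ofReal_one]
    exact ENNReal.ofReal_lt_ofReal_iff_of_nonneg (by linarith) |>.mpr (by linarith)
  have hev : ∀ᶠ r in nhdsWithin 0 (Set.Ioi 0),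
      c < volume (B ∩ closedBall t₀ r) / volume (closedBall t₀ r) :=
    ht₀.eventually (eventually_gt_nhds hc1)
  -- the sequence 1/(n k) tends to 0 from the right
  have hN : ∀ k, (0:ℝ) < (n k : ℝ) := fun k => by exact_mod_cast hpos k
  have hrt : Tendsto (fun k => ((n k : ℝ))⁻¹) atTop (nhdsWithin 0 (Set.Ioi 0)) := by
    apply tendsto_nhdsWithin_of_tendsto_nhds_of_eventually_within
    · exact tendsto_inv_atTop_zero.comp
        (tendsto_natCast_atTop_atTop.comp hmono.tendsto_atTop)
    · exact Eventually.of_forall fun k => inv_pos.mpr (hN k)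
  obtain ⟨k, hk⟩ := (hrt.eventually hev).exists
  -- now derive the upper bound contradiction for this k
  set N := (n k : ℝ) with hNdef
  have hN0 : (0:ℝ) < N := hN k
  set r : ℝ := N⁻¹ with hr
  have hr0 : (0:ℝ) < r := inv_pos.mpr hN0
  set m : ℤ := ⌈N * (t₀ - r)⌉ with hm
  have hm1 : N * (t₀ - r) ≤ (m:ℝ) := Int.le_ceil _
  have hm2 : (m:ℝ) ≤ N * (t₀ - r) + 1 := le_of_lt (Int.ceil_lt_add_one _)
  set G : Set ℝ := Set.Ioo (((m:ℝ) + a) / N) (((m:ℝ) + b) / N) with hG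
  have hGball : G ⊆ closedBall t₀ r := by
    intro t ht
    rw [Real.closedBall_eq_Icc]
    obtain ⟨h1, h2⟩ := ht
    have hNr : N * r = 1 := mul_inv_cancel₀ (ne_of_gt hN0)
    constructor
    · have : t₀ - r ≤ ((m:ℝ) + a) / N := by
        rw [le_div_iff₀ hN0]; nlinarith
      linarith
    · have : ((m:ℝ) + b) / N ≤ t₀ + r := by
        rw [div_le_iff₀ hN0]; nlinarith
      linarith
  have hGnotB : ∀ t ∈ G, t ∉ B := by
    intro t ht htB
    obtain ⟨h1, h2⟩ := ht
    rw [div_lt_iff₀ hN0] at h1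
    rw [lt_div_iff₀ hN0] at h2
    have h1' : (m:ℝ) + a < N * t := by linarith [mul_comm t N]
    have h2' : N * t < (m:ℝ) + b := by linarith [mul_comm t N]
    have hfloor : ⌊N * t⌋ = m := by
      rw [Int.floor_eq_iff]
      refine ⟨by linarith, by push_cast; linarith⟩
    have hfr : Int.fract (N * t) = N * t - (m:ℝ) := by
      rw [← Int.self_sub_floor, hfloor]
    exact htB k (by rw [hNdef] at hfr; rw [hfr]; exact ⟨by linarith, by linarith⟩)
  have hsub : B ∩ closedBall t₀ r ⊆ closedBall t₀ r \ G := by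
    intro t ⟨h1, h2⟩
    exact ⟨h2, fun hG' => hGnotB t hG' h1⟩
  have hvol : volume (closedBall t₀ r \ G) = ENNReal.ofReal (2 * r) - ENNReal.ofReal ((b - a) * r) := by
    rw [measure_diff (hGball) measurableSet_Ioo.nullMeasurableSet (by
        rw [hG, Real.volume_Ioo]; exact ENNReal.ofReal_ne_top)]
    rw [Real.volume_closedBall, hG, Real.volume_Ioo]
    congr 1
    rw [div_sub_div_same, hr, div_eq_mul_inv]
    congr 1
    ring
  have hub : volume (B ∩ closedBall t₀ r) / volume (closedBall t₀ r) ≤ c := by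
    refine le_trans (ENNReal.div_le_div_right (le_trans (measure_mono hsub) (le_of_eq hvol)) _) ?_
    rw [Real.volume_closedBall]
    rw [← ENNReal.ofReal_sub _ (mul_nonneg (by linarith) hr0.le)]
    rw [← ENNReal.ofReal_div_of_pos (by positivity : (0:ℝ) < 2 * r)]
    apply ENNReal.ofReal_le_ofReal
    rw [div_le_iff₀ (by linarith : (0:ℝ) < 2 * r)]
    have h2r : (1 - (b - a) / 2) * (2 * r) = 2 * r - (b - a) * r := by ring
    rw [h2r]
  exact absurd hk (not_lt.mpr hub)
lemma key_ae (n : ℕ → ℕ) (hpos : ∀ k, 0 < n k) (hmono : StrictMono n) :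
    ∀ᵐ t : ℝ, ∀ a b : ℚ, 0 ≤ a → a < b → b ≤ 1 →
      ∃ k, Int.fract ((n k : ℝ) * t) ∈ Set.Ioo (a:ℝ) (b:ℝ) := by
  rw [ae_all_iff]
  intro a
  rw [ae_all_iff]
  intro b
  by_cases hva : 0 ≤ a
  · by_cases hvab : a < b
    · by_cases hvb : b ≤ 1
      · have := key_null n hpos hmono (a:ℝ) (b:ℝ) (by exact_mod_cast hva)
          (by exact_mod_cast hvab) (by exact_mod_cast hvb)
        rw [← compl_compl {t : ℝ | ∀ (k : ℕ), Int.fract (↑(n k) * t) ∉ Set.Ioo (a:ℝ) (b:ℝ)}] at this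
        have hae : ∀ᵐ t : ℝ, ∃ k, Int.fract ((n k : ℝ) * t) ∈ Set.Ioo (a:ℝ) (b:ℝ) := by
          rw [MeasureTheory.ae_iff]
          convert key_null n hpos hmono (a:ℝ) (b:ℝ) (by exact_mod_cast hva)
            (by exact_mod_cast hvab) (by exact_mod_cast hvb) using 2
          ext t
          push_neg
          rfl
        filter_upwards [hae] with t ht _ _ _ using ht
      · exact Eventually.of_forall fun t h1 h2 h3 => absurd h3 hvb
    · exact Eventually.of_forall fun t h1 h2 h3 => absurd h2 hvab
  · exact Eventually.of_forall fun t h1 h2 h3 => absurd h1 hva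

lemma dense_of_H (n : ℕ → ℕ) (t : ℝ)
    (H : ∀ a b : ℚ, 0 ≤ a → a < b → b ≤ 1 →
      ∃ k, Int.fract ((n k : ℝ) * t) ∈ Set.Ioo (a:ℝ) (b:ℝ)) :
    Set.Icc (0:ℝ) 1 ⊆ closure (Set.range fun k : ℕ => Int.fract ((n k : ℝ) * t)) := by
  intro x hx
  obtain ⟨hx0, hx1⟩ := hx
  rw [Metric.mem_closure_iff]
  intro ε hε
  have hlu : max 0 (x - ε) < min 1 (x + ε) := by
    apply max_lt
    · exact lt_min one_pos (by linarith)
    · exact lt_min (by linarith) (by linarith)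
  obtain ⟨a, ha1, ha2⟩ := exists_rat_btwn hlu
  obtain ⟨b, hb1, hb2⟩ := exists_rat_btwn ha2
  have hqa : (0:ℚ) ≤ a := by
    have : (0:ℝ) ≤ (a:ℝ) := le_of_lt (lt_of_le_of_lt (le_max_left 0 (x-ε)) ha1)
    exact_mod_cast this
  have hqab : a < b := by exact_mod_cast hb1
  have hqb : (b:ℚ) ≤ 1 := by
    have : (b:ℝ) ≤ 1 := le_of_lt (lt_of_lt_of_le hb2 (min_le_left 1 (x+ε)))
    exact_mod_cast this
  obtain ⟨k, hk1, hk2⟩ := H a b hqa hqab hqb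
  refine ⟨Int.fract ((n k : ℝ) * t), ⟨k, rfl⟩, ?_⟩
  rw [Real.dist_eq, abs_lt]
  have h1 : x - ε ≤ max 0 (x - ε) := le_max_right _ _
  have h2 : min 1 (x + ε) ≤ x + ε := min_le_right _ _
  constructor <;> nlinarith [lt_trans ha1 hb1]

/-- For a strictly increasing sequence of positive integers `(n_k)`, for Lebesgue-almost
every `s > 0` the set of fractional parts `{n_k / s}` is dense in `[0,1]`. -/
theorem stmt_19 (n : ℕ → ℕ) (hpos : ∀ k, 0 < n k) (hmono : StrictMono n) :
    ∀ᵐ s ∂(volume.restrict (Set.Ioi (0:ℝ))),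
      Set.Icc (0:ℝ) 1 ⊆ closure (Set.range fun k : ℕ => Int.fract ((n k : ℝ) / s)) := by
  set Tbad := {t : ℝ | ¬ ∀ a b : ℚ, 0 ≤ a → a < b → b ≤ 1 →
      ∃ k, Int.fract ((n k : ℝ) * t) ∈ Set.Ioo (a:ℝ) (b:ℝ)} with hTdef
  have hTnull : volume Tbad = 0 := by
    rw [hTdef, ← MeasureTheory.ae_iff]
    exact key_ae n hpos hmono
  have himg : volume ((fun t : ℝ => t⁻¹) '' (Tbad ∩ Set.Ioi 0)) = 0 := by
    apply addHaar_image_eq_zero_of_differentiableOn_of_addHaar_eq_zero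
    · intro t ht
      exact (differentiableAt_inv (ne_of_gt ht.2)).differentiableWithinAt
    · exact measure_mono_null Set.inter_subset_left hTnull
  rw [MeasureTheory.ae_iff, Measure.restrict_apply' measurableSet_Ioi]
  refine measure_mono_null ?_ himg
  rintro s ⟨hsbad, hs0⟩
  refine ⟨s⁻¹, ⟨?_, Set.mem_Ioi.mpr (inv_pos.mpr hs0)⟩, inv_inv s⟩
  intro H
  apply hsbad
  have := dense_of_H n s⁻¹ H
  convert this using 3
  simp only [div_eq_mul_inv]
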